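/- Let n ≥ 1, d ≥ 0, Σ ≥ 0, γ ∈ (0, 1), α ∈ [0, 1], δ ∈ ℝ, C₂ > 0, and 0 < T₀ ≤ ∞. Let K : ℝⁿ → [0, ∞) be measurable and suppose that for every nonnegative integer m and every x ∈ ℝⁿ: ∫_{ℝⁿ} K(x − y)·‖y‖^{d + mΣ}·exp(δ‖y‖^α) dy ≥ γ·‖x‖^{d + mΣ}·exp(δ‖x‖^α). Let Λ : [0, T₀) → (0, ∞) be measurable and bounded on compact subintervals, and let W : ℝⁿ × [0, T₀) → [0, ∞) be measurable with W(y, t) ≥ Λ(t)·‖y‖^Σ for all y and t. Suppose ν : ℝⁿ × [0, T₀) → [0, ∞] is measurable and satisfies ν(x, t) ≥ C₂·‖x‖^d·exp(δ‖x‖^α) + ∫_0^t ∫_{ℝⁿ} K(x − y) W(y, τ) ν(y, τ) dy dτ for all x and t. Then for all x ∈ ℝⁿ and t ∈ [0, T₀): ν(x, t) ≥ C₂ · ‖x‖^d · exp(γ·(∫_0^t Λ(τ) dτ)·‖x‖^Σ + δ‖x‖^α). -/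

import Mathlib

open MeasureTheory ENNReal

noncomputable def Lfun (Λ : ℝ → ℝ) (u : ℝ) : ℝ≥0∞ :=
  ∫⁻ s in Set.Ioc (0:ℝ) u, ENNReal.ofReal (Λ s)

lemma Lfun_mono (Λ : ℝ → ℝ) : Monotone (Lfun Λ) := fun _ _ hab =>
  lintegral_mono_set (Set.Ioc_subset_Ioc_right hab)

lemma Lfun_meas (Λ : ℝ → ℝ) : Measurable (Lfun Λ) := (Lfun_mono Λ).measurable

lemma keyA (Λ : ℝ → ℝ) (hm : Measurable Λ)
    (hfin : ∀ u : ℝ, Lfun Λ u ≠ ∞) :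
    ∀ (k : ℕ) (t : ℝ),
      (∫⁻ τ in Set.Ioc (0:ℝ) t, ENNReal.ofReal (Λ τ) * Lfun Λ τ ^ k)
        = Lfun Λ t ^ (k + 1) / ((k : ℝ≥0∞) + 1) := by
  have hΛm : Measurable fun s => ENNReal.ofReal (Λ s) := hm.ennreal_ofReal
  have hLmono := Lfun_mono Λ
  have hLmeas := Lfun_meas Λ
  intro k
  induction k with
  | zero =>
      intro t
      simp only [pow_zero, mul_one, Nat.cast_zero, zero_add, pow_one, div_one]
      rfl
  | succ k ih =>
      intro t
      set g : ℝ → ℝ → ℝ≥0∞ := fun τ s =>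
        if s ≤ τ then ENNReal.ofReal (Λ s) * (ENNReal.ofReal (Λ τ) * Lfun Λ τ ^ k) else 0
        with hgdef
      have hg : Measurable fun p : ℝ × ℝ => g p.1 p.2 := by
        apply Measurable.ite (measurableSet_le measurable_snd measurable_fst)
        · exact (hΛm.comp measurable_snd).mul
            ((hΛm.comp measurable_fst).mul ((hLmeas.comp measurable_fst).pow_const k))
        · exact measurable_const
      have hQfin : ∀ u, Lfun Λ u ^ (k+1) / ((k : ℝ≥0∞) + 1) ≠ ∞ := fun u =>
        (ENNReal.div_lt_top (pow_ne_top (hfin u)) (by simp)).ne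
      have hQmono : ∀ a b : ℝ, a ≤ b →
          Lfun Λ a ^ (k+1) / ((k : ℝ≥0∞) + 1) ≤ Lfun Λ b ^ (k+1) / ((k : ℝ≥0∞) + 1) :=
        fun a b hab => ENNReal.div_le_div_right
          (pow_le_pow_left₀ zero_le (hLmono hab) _) _
      have step1 : (∫⁻ τ in Set.Ioc (0:ℝ) t, ENNReal.ofReal (Λ τ) * Lfun Λ τ ^ (k+1))
          = ∫⁻ τ in Set.Ioc (0:ℝ) t, ∫⁻ s in Set.Ioc (0:ℝ) t, g τ s := by
        refine setLIntegral_congr_fun measurableSet_Ioc (fun τ hτ => ?_)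
        have hind : (fun s => g τ s) = (Set.Iic τ).indicator
            (fun s => ENNReal.ofReal (Λ s) * (ENNReal.ofReal (Λ τ) * Lfun Λ τ ^ k)) := by
          funext s
          by_cases h : s ≤ τ <;> simp [hgdef, Set.indicator, h]
        rw [hind, lintegral_indicator measurableSet_Iic,
          Measure.restrict_restrict measurableSet_Iic]
        have hsub : Set.Iic τ ∩ Set.Ioc (0:ℝ) t = Set.Ioc 0 τ := by
          ext s
          simp only [Set.mem_inter_iff, Set.mem_Iic, Set.mem_Ioc]
          exact ⟨fun h => ⟨h.2.1, h.1⟩, fun h => ⟨h.2, h.1, h.2.trans hτ.2⟩⟩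
        rw [hsub, lintegral_mul_const _ hΛm]
        rw [show (∫⁻ s in Set.Ioc (0:ℝ) τ, ENNReal.ofReal (Λ s)) = Lfun Λ τ from rfl,
          pow_succ]
        ring
      have hswap : (∫⁻ τ in Set.Ioc (0:ℝ) t, ∫⁻ s in Set.Ioc (0:ℝ) t, g τ s)
          = ∫⁻ s in Set.Ioc (0:ℝ) t, ∫⁻ τ in Set.Ioc (0:ℝ) t, g τ s :=
        lintegral_lintegral_swap hg.aemeasurable
      have step3 : (∫⁻ s in Set.Ioc (0:ℝ) t, ∫⁻ τ in Set.Ioc (0:ℝ) t, g τ s)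
          = ∫⁻ s in Set.Ioc (0:ℝ) t, ENNReal.ofReal (Λ s) *
              (Lfun Λ t ^ (k+1) / ((k : ℝ≥0∞) + 1) - Lfun Λ s ^ (k+1) / ((k : ℝ≥0∞) + 1)) := by
        refine setLIntegral_congr_fun measurableSet_Ioc (fun s hs => ?_)
        have hind : (fun τ => g τ s) = (Set.Ici s).indicator
            (fun τ => ENNReal.ofReal (Λ s) * (ENNReal.ofReal (Λ τ) * Lfun Λ τ ^ k)) := by
          funext τ
          by_cases h : s ≤ τ <;> simp [hgdef, Set.indicator, h]
        rw [hind, lintegral_indicator measurableSet_Ici,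
          Measure.restrict_restrict measurableSet_Ici]
        have hsub : Set.Ici s ∩ Set.Ioc (0:ℝ) t = Set.Icc s t := by
          ext τ
          simp only [Set.mem_inter_iff, Set.mem_Ici, Set.mem_Ioc, Set.mem_Icc]
          exact ⟨fun h => ⟨h.1, h.2.2⟩, fun h => ⟨h.1, lt_of_lt_of_le hs.1 h.1, h.2⟩⟩
        rw [hsub, ← Measure.restrict_congr_set Ioc_ae_eq_Icc,
          lintegral_const_mul _ (show Measurable fun τ => ENNReal.ofReal (Λ τ) * Lfun Λ τ ^ k from hΛm.mul (hLmeas.pow_const k))]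
        congr 1
        have hsplit : (∫⁻ τ in Set.Ioc (0:ℝ) s, ENNReal.ofReal (Λ τ) * Lfun Λ τ ^ k)
            + (∫⁻ τ in Set.Ioc s t, ENNReal.ofReal (Λ τ) * Lfun Λ τ ^ k)
            = ∫⁻ τ in Set.Ioc (0:ℝ) t, ENNReal.ofReal (Λ τ) * Lfun Λ τ ^ k := by
          rw [← lintegral_union measurableSet_Ioc (Set.Ioc_disjoint_Ioc_of_le le_rfl),
            Set.Ioc_union_Ioc_eq_Ioc hs.1.le hs.2]
        rw [ih, ih] at hsplit
        rw [← hsplit, ENNReal.add_sub_cancel_left (hQfin s)]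
      -- the main equation
      set X := ∫⁻ τ in Set.Ioc (0:ℝ) t, ENNReal.ofReal (Λ τ) * Lfun Λ τ ^ (k+1) with hX
      have hXfin : X ≠ ∞ := by
        have hle : X ≤ ∫⁻ τ in Set.Ioc (0:ℝ) t, ENNReal.ofReal (Λ τ) * Lfun Λ t ^ (k+1) := by
          refine setLIntegral_mono (hΛm.mul_const _) fun τ hτ => ?_
          exact mul_le_mul_right (pow_le_pow_left₀ zero_le (hLmono hτ.2) _) _
        rw [lintegral_mul_const _ hΛm] at hle
        exact ne_top_of_le_ne_top (ENNReal.mul_ne_top (hfin t) (pow_ne_top (hfin t))) hle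
      have key : X + X * ((k : ℝ≥0∞) + 1)⁻¹
          = Lfun Λ t * (Lfun Λ t ^ (k+1) / ((k : ℝ≥0∞) + 1)) := by
        have e1 : X = ∫⁻ s in Set.Ioc (0:ℝ) t, ENNReal.ofReal (Λ s) *
            (Lfun Λ t ^ (k+1) / ((k : ℝ≥0∞) + 1) - Lfun Λ s ^ (k+1) / ((k : ℝ≥0∞) + 1)) :=
          step1.trans (hswap.trans step3)
        have e2 : X * ((k : ℝ≥0∞) + 1)⁻¹
            = ∫⁻ s in Set.Ioc (0:ℝ) t, ENNReal.ofReal (Λ s) *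
                (Lfun Λ s ^ (k+1) / ((k : ℝ≥0∞) + 1)) := by
          rw [hX, ← lintegral_mul_const _ (show Measurable fun τ => ENNReal.ofReal (Λ τ) * Lfun Λ τ ^ (k+1) from hΛm.mul (hLmeas.pow_const _))]
          refine lintegral_congr fun s => ?_
          rw [div_eq_mul_inv]; ring
        rw [e2, e1, ← lintegral_add_left]
        · have : (∫⁻ s in Set.Ioc (0:ℝ) t, (ENNReal.ofReal (Λ s) *
              (Lfun Λ t ^ (k+1) / ((k : ℝ≥0∞) + 1) - Lfun Λ s ^ (k+1) / ((k : ℝ≥0∞) + 1))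
              + ENNReal.ofReal (Λ s) * (Lfun Λ s ^ (k+1) / ((k : ℝ≥0∞) + 1))))
              = ∫⁻ s in Set.Ioc (0:ℝ) t, ENNReal.ofReal (Λ s) *
                  (Lfun Λ t ^ (k+1) / ((k : ℝ≥0∞) + 1)) := by
            refine setLIntegral_congr_fun measurableSet_Ioc (fun s hs => ?_)
            rw [← mul_add, tsub_add_cancel_of_le (hQmono s t hs.2)]
          rw [this, lintegral_mul_const _ hΛm]
          rw [show (∫⁻ s in Set.Ioc (0:ℝ) t, ENNReal.ofReal (Λ s)) = Lfun Λ t from rfl,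
            mul_comm]
        · exact hΛm.mul (measurable_const.sub ((hLmeas.pow_const _).div_const _))
      have hc0 : ((k : ℝ≥0∞) + 1) ≠ 0 := by simp
      have hct : ((k : ℝ≥0∞) + 1) ≠ ∞ := by simp
      have hinv : ((k : ℝ≥0∞) + 1) * ((k : ℝ≥0∞) + 1)⁻¹ = 1 :=
        ENNReal.mul_inv_cancel hc0 hct
      rw [ENNReal.eq_div_iff (by simp) (by simp)]
      calc (((k + 1 : ℕ) : ℝ≥0∞) + 1) * X
          = ((k : ℝ≥0∞) + 1) * X + X := by push_cast; ring
        _ = ((k : ℝ≥0∞) + 1) * X + X * (((k : ℝ≥0∞) + 1) * ((k : ℝ≥0∞) + 1)⁻¹) := by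
            rw [hinv, mul_one]
        _ = ((k : ℝ≥0∞) + 1) * (X + X * ((k : ℝ≥0∞) + 1)⁻¹) := by ring
        _ = ((k : ℝ≥0∞) + 1) * (Lfun Λ t * (Lfun Λ t ^ (k+1) / ((k : ℝ≥0∞) + 1))) := by
            rw [key]
        _ = (((k : ℝ≥0∞) + 1) * ((k : ℝ≥0∞) + 1)⁻¹) * (Lfun Λ t * Lfun Λ t ^ (k+1)) := by
            rw [div_eq_mul_inv]; ring
        _ = Lfun Λ t ^ (k + 1 + 1) := by rw [hinv, one_mul, ← pow_succ']

noncomputable def Bfun (Λ : ℝ → ℝ) (d Sg γ α δ C₂ : ℝ) {n : ℕ}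
    (x : EuclideanSpace ℝ (Fin n)) (t : ℝ) (k : ℕ) : ℝ≥0∞ :=
  ENNReal.ofReal (C₂ * ‖x‖ ^ (d + (k : ℝ) * Sg) * Real.exp (δ * ‖x‖ ^ α)) *
    (ENNReal.ofReal γ ^ k * ((k.factorial : ℝ≥0∞))⁻¹ * Lfun Λ t ^ k)

theorem exponential_lower_bound (n : ℕ) (hn : 1 ≤ n)
    (d Sg γ α δ C₂ : ℝ) (hd : 0 ≤ d) (hSg : 0 ≤ Sg)
    (hγ : γ ∈ Set.Ioo (0 : ℝ) 1) (hα : α ∈ Set.Icc (0 : ℝ) 1) (hC₂ : 0 < C₂)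
    (T₀ : ℝ≥0∞) (hT₀ : 0 < T₀)
    (K : EuclideanSpace ℝ (Fin n) → ℝ) (hKmeas : Measurable K)
    (hK0 : ∀ z, 0 ≤ K z)
    (hK : ∀ m : ℕ, ∀ x : EuclideanSpace ℝ (Fin n),
      ENNReal.ofReal (γ * ‖x‖ ^ (d + (m : ℝ) * Sg) * Real.exp (δ * ‖x‖ ^ α)) ≤
        ∫⁻ y, ENNReal.ofReal
          (K (x - y) * (‖y‖ ^ (d + (m : ℝ) * Sg) * Real.exp (δ * ‖y‖ ^ α))))
    (Λ : ℝ → ℝ) (hΛmeas : Measurable Λ) (hΛpos : ∀ t, 0 < Λ t)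
    (hΛbdd : ∀ t : ℝ, 0 ≤ t → BddAbove (Λ '' Set.Icc 0 t))
    (W : EuclideanSpace ℝ (Fin n) → ℝ → ℝ)
    (hWmeas : Measurable (Function.uncurry W))
    (hW0 : ∀ y, ∀ t : ℝ, 0 ≤ t → ENNReal.ofReal t < T₀ → 0 ≤ W y t)
    (hW : ∀ y : EuclideanSpace ℝ (Fin n), ∀ t : ℝ, 0 ≤ t → ENNReal.ofReal t < T₀ →
      Λ t * ‖y‖ ^ Sg ≤ W y t)
    (ν : EuclideanSpace ℝ (Fin n) → ℝ → ℝ≥0∞)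
    (hνmeas : Measurable (Function.uncurry ν))
    (hν : ∀ x : EuclideanSpace ℝ (Fin n), ∀ t : ℝ, 0 ≤ t → ENNReal.ofReal t < T₀ →
      ENNReal.ofReal (C₂ * ‖x‖ ^ d * Real.exp (δ * ‖x‖ ^ α)) +
        (∫⁻ τ in Set.Ioc (0 : ℝ) t, ∫⁻ y,
          ENNReal.ofReal (K (x - y) * W y τ) * ν y τ) ≤ ν x t) :
    ∀ x : EuclideanSpace ℝ (Fin n), ∀ t : ℝ, 0 ≤ t → ENNReal.ofReal t < T₀ →
      ENNReal.ofReal (C₂ * ‖x‖ ^ d *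
          Real.exp (γ * (∫ τ in Set.Ioc (0 : ℝ) t, Λ τ) * ‖x‖ ^ Sg + δ * ‖x‖ ^ α)) ≤
        ν x t := by
  obtain ⟨hγ0, hγ1⟩ := hγ
  obtain ⟨hα0, hα1⟩ := hα
  have hΛm : Measurable fun s => ENNReal.ofReal (Λ s) := hΛmeas.ennreal_ofReal
  have hLmeas := Lfun_meas Λ
  have hLmono := Lfun_mono Λ
  have hLfin : ∀ u : ℝ, Lfun Λ u ≠ ∞ := by
    intro u
    rcases le_or_gt u 0 with hu | hu
    · rw [show Lfun Λ u = ∫⁻ s in Set.Ioc (0:ℝ) u, ENNReal.ofReal (Λ s) from rfl,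
        Set.Ioc_eq_empty (not_lt.mpr hu)]
      simp
    · have hMle : ∀ τ ∈ Set.Ioc (0:ℝ) u, Λ τ ≤ sSup (Λ '' Set.Icc 0 u) := fun τ hτ =>
        le_csSup (hΛbdd u hu.le) ⟨τ, ⟨hτ.1.le, hτ.2⟩, rfl⟩
      have h1 : Lfun Λ u ≤ ∫⁻ τ in Set.Ioc (0:ℝ) u, ENNReal.ofReal (sSup (Λ '' Set.Icc 0 u)) :=
        setLIntegral_mono measurable_const fun τ hτ => ENNReal.ofReal_le_ofReal (hMle τ hτ)
      rw [setLIntegral_const] at h1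
      exact ne_top_of_le_ne_top (ENNReal.mul_ne_top ofReal_ne_top measure_Ioc_lt_top.ne) h1
  have hrpow : ∀ e : ℝ, 0 ≤ e →
      Measurable fun y : EuclideanSpace ℝ (Fin n) => ‖y‖ ^ e :=
    fun e he => (Real.continuous_rpow_const he).measurable.comp measurable_norm
  have hexpm : Measurable fun y : EuclideanSpace ℝ (Fin n) => Real.exp (δ * ‖y‖ ^ α) :=
    Real.continuous_exp.measurable.comp ((hrpow α hα0).const_mul δ)
  have hKx : ∀ x : EuclideanSpace ℝ (Fin n), Measurable fun y => K (x - y) :=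
    fun x => hKmeas.comp (measurable_const.sub measurable_id)
  have hB0 : ∀ (x : EuclideanSpace ℝ (Fin n)) (t : ℝ),
      Bfun Λ d Sg γ α δ C₂ x t 0
        = ENNReal.ofReal (C₂ * ‖x‖ ^ d * Real.exp (δ * ‖x‖ ^ α)) := by
    intro x t
    simp [Bfun]
  -- the main induction
  have main : ∀ (M : ℕ) (x : EuclideanSpace ℝ (Fin n)) (t : ℝ),
      0 ≤ t → ENNReal.ofReal t < T₀ →
      (∑ k ∈ Finset.range (M+1), Bfun Λ d Sg γ α δ C₂ x t k) ≤ ν x t := by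
    intro M
    induction M with
    | zero =>
        intro x t ht ht'
        rw [Finset.sum_range_one, hB0]
        exact le_trans (self_le_add_right _ _) (hν x t ht ht')
    | succ M ihM =>
        intro x t ht ht'
        have claim : ∀ τ ∈ Set.Ioc (0:ℝ) t,
            (∑ k ∈ Finset.range (M+1),
              (ENNReal.ofReal (Λ τ) * Lfun Λ τ ^ k) *
                (ENNReal.ofReal C₂ * (ENNReal.ofReal γ ^ k * ((k.factorial : ℝ≥0∞))⁻¹) *
                  ENNReal.ofReal (γ * ‖x‖ ^ (d + ((k+1 : ℕ) : ℝ) * Sg) *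
                    Real.exp (δ * ‖x‖ ^ α))))
            ≤ ∫⁻ y, ENNReal.ofReal (K (x - y) * W y τ) * ν y τ := by
          intro τ hτ
          have hτ0 : (0:ℝ) ≤ τ := hτ.1.le
          have hτT : ENNReal.ofReal τ < T₀ :=
            lt_of_le_of_lt (ENNReal.ofReal_le_ofReal hτ.2) ht'
          have hrw : ∀ (k : ℕ) (y : EuclideanSpace ℝ (Fin n)),
              ENNReal.ofReal (K (x - y) * (Λ τ * ‖y‖ ^ Sg)) * Bfun Λ d Sg γ α δ C₂ y τ k
              = (ENNReal.ofReal (Λ τ) * Lfun Λ τ ^ k *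
                  (ENNReal.ofReal C₂ * (ENNReal.ofReal γ ^ k * ((k.factorial : ℝ≥0∞))⁻¹))) *
                ENNReal.ofReal (K (x - y) *
                  (‖y‖ ^ (d + ((k+1 : ℕ) : ℝ) * Sg) * Real.exp (δ * ‖y‖ ^ α))) := by
            intro k y
            have hy : ‖y‖ ^ (d + ((k+1 : ℕ) : ℝ) * Sg)
                = ‖y‖ ^ Sg * ‖y‖ ^ (d + (k:ℝ) * Sg) := by
              rw [show d + ((k+1 : ℕ) : ℝ) * Sg = Sg + (d + (k:ℝ) * Sg) by push_cast; ring,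
                Real.rpow_add_of_nonneg (norm_nonneg y) hSg (by positivity)]
            calc ENNReal.ofReal (K (x - y) * (Λ τ * ‖y‖ ^ Sg)) * Bfun Λ d Sg γ α δ C₂ y τ k
                = (ENNReal.ofReal (K (x - y) * (Λ τ * ‖y‖ ^ Sg)) *
                    ENNReal.ofReal (C₂ * ‖y‖ ^ (d + (k:ℝ)*Sg) * Real.exp (δ * ‖y‖ ^ α))) *
                    (ENNReal.ofReal γ ^ k * ((k.factorial : ℝ≥0∞))⁻¹ * Lfun Λ τ ^ k) := by
                  rw [Bfun]; ring
              _ = (ENNReal.ofReal (Λ τ) * ENNReal.ofReal C₂ *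
                    ENNReal.ofReal (K (x - y) *
                      (‖y‖ ^ (d + ((k+1:ℕ):ℝ)*Sg) * Real.exp (δ * ‖y‖ ^ α)))) *
                    (ENNReal.ofReal γ ^ k * ((k.factorial : ℝ≥0∞))⁻¹ * Lfun Λ τ ^ k) := by
                  congr 1
                  rw [← ENNReal.ofReal_mul
                      (mul_nonneg (hK0 _) (mul_nonneg (hΛpos τ).le (by positivity))),
                    ← ENNReal.ofReal_mul (hΛpos τ).le,
                    ← ENNReal.ofReal_mul (mul_nonneg (hΛpos τ).le hC₂.le)]
                  congr 1
                  rw [hy]; ring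
              _ = _ := by ring
          have hKintm : ∀ k : ℕ, Measurable fun y : EuclideanSpace ℝ (Fin n) =>
              ENNReal.ofReal (K (x - y) *
                (‖y‖ ^ (d + ((k+1:ℕ):ℝ)*Sg) * Real.exp (δ * ‖y‖ ^ α))) := fun k =>
            ((hKx x).mul ((hrpow _ (by positivity)).mul hexpm)).ennreal_ofReal
          have hterm : ∀ k : ℕ,
              (ENNReal.ofReal (Λ τ) * Lfun Λ τ ^ k) *
                (ENNReal.ofReal C₂ * (ENNReal.ofReal γ ^ k * ((k.factorial : ℝ≥0∞))⁻¹) *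
                  ENNReal.ofReal (γ * ‖x‖ ^ (d + ((k+1 : ℕ) : ℝ) * Sg) *
                    Real.exp (δ * ‖x‖ ^ α)))
              ≤ ∫⁻ y, ENNReal.ofReal (K (x - y) * (Λ τ * ‖y‖ ^ Sg)) *
                  Bfun Λ d Sg γ α δ C₂ y τ k := by
            intro k
            calc (ENNReal.ofReal (Λ τ) * Lfun Λ τ ^ k) *
                (ENNReal.ofReal C₂ * (ENNReal.ofReal γ ^ k * ((k.factorial : ℝ≥0∞))⁻¹) *
                  ENNReal.ofReal (γ * ‖x‖ ^ (d + ((k+1 : ℕ) : ℝ) * Sg) *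
                    Real.exp (δ * ‖x‖ ^ α)))
                = (ENNReal.ofReal (Λ τ) * Lfun Λ τ ^ k *
                    (ENNReal.ofReal C₂ * (ENNReal.ofReal γ ^ k * ((k.factorial : ℝ≥0∞))⁻¹))) *
                  ENNReal.ofReal (γ * ‖x‖ ^ (d + ((k+1 : ℕ) : ℝ) * Sg) *
                    Real.exp (δ * ‖x‖ ^ α)) := by ring
              _ ≤ (ENNReal.ofReal (Λ τ) * Lfun Λ τ ^ k *
                    (ENNReal.ofReal C₂ * (ENNReal.ofReal γ ^ k * ((k.factorial : ℝ≥0∞))⁻¹))) *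
                  ∫⁻ y, ENNReal.ofReal (K (x - y) *
                    (‖y‖ ^ (d + ((k+1:ℕ):ℝ)*Sg) * Real.exp (δ * ‖y‖ ^ α))) :=
                mul_le_mul_right (hK (k+1) x) _
              _ = ∫⁻ y, (ENNReal.ofReal (Λ τ) * Lfun Λ τ ^ k *
                    (ENNReal.ofReal C₂ * (ENNReal.ofReal γ ^ k * ((k.factorial : ℝ≥0∞))⁻¹))) *
                  ENNReal.ofReal (K (x - y) *
                    (‖y‖ ^ (d + ((k+1:ℕ):ℝ)*Sg) * Real.exp (δ * ‖y‖ ^ α))) :=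
                (lintegral_const_mul _ (hKintm k)).symm
              _ = ∫⁻ y, ENNReal.ofReal (K (x - y) * (Λ τ * ‖y‖ ^ Sg)) *
                  Bfun Λ d Sg γ α δ C₂ y τ k :=
                lintegral_congr fun y => (hrw k y).symm
          have hsummeas : ∀ k ∈ Finset.range (M+1),
              Measurable fun y : EuclideanSpace ℝ (Fin n) =>
                ENNReal.ofReal (K (x - y) * (Λ τ * ‖y‖ ^ Sg)) *
                  Bfun Λ d Sg γ α δ C₂ y τ k := by
            intro k _
            refine ((hKx x).mul ((hrpow Sg hSg).const_mul (Λ τ))).ennreal_ofReal.mul ?_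
            unfold Bfun
            exact ((((hrpow _ (by positivity)).const_mul C₂).mul hexpm).ennreal_ofReal).mul_const _
          calc (∑ k ∈ Finset.range (M+1),
              (ENNReal.ofReal (Λ τ) * Lfun Λ τ ^ k) *
                (ENNReal.ofReal C₂ * (ENNReal.ofReal γ ^ k * ((k.factorial : ℝ≥0∞))⁻¹) *
                  ENNReal.ofReal (γ * ‖x‖ ^ (d + ((k+1 : ℕ) : ℝ) * Sg) *
                    Real.exp (δ * ‖x‖ ^ α))))
              ≤ ∑ k ∈ Finset.range (M+1), ∫⁻ y,
                  ENNReal.ofReal (K (x - y) * (Λ τ * ‖y‖ ^ Sg)) *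
                    Bfun Λ d Sg γ α δ C₂ y τ k :=
              Finset.sum_le_sum fun k _ => hterm k
            _ = ∫⁻ y, ∑ k ∈ Finset.range (M+1),
                  ENNReal.ofReal (K (x - y) * (Λ τ * ‖y‖ ^ Sg)) *
                    Bfun Λ d Sg γ α δ C₂ y τ k :=
              (lintegral_finset_sum _ hsummeas).symm
            _ ≤ ∫⁻ y, ENNReal.ofReal (K (x - y) * W y τ) * ν y τ := by
              refine lintegral_mono fun y => ?_
              rw [← Finset.mul_sum]
              exact mul_le_mul'
                (ENNReal.ofReal_le_ofReal
                  (mul_le_mul_of_nonneg_left (hW y τ hτ0 hτT) (hK0 _)))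
                (ihM y τ hτ0 hτT)
        -- integrate claim over τ
        have hDge : (∑ k ∈ Finset.range (M+1),
            (Lfun Λ t ^ (k+1) / ((k : ℝ≥0∞) + 1)) *
              (ENNReal.ofReal C₂ * (ENNReal.ofReal γ ^ k * ((k.factorial : ℝ≥0∞))⁻¹) *
                ENNReal.ofReal (γ * ‖x‖ ^ (d + ((k+1 : ℕ) : ℝ) * Sg) *
                  Real.exp (δ * ‖x‖ ^ α))))
            ≤ ∫⁻ τ in Set.Ioc (0:ℝ) t, ∫⁻ y,
                ENNReal.ofReal (K (x - y) * W y τ) * ν y τ := by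
          calc (∑ k ∈ Finset.range (M+1),
              (Lfun Λ t ^ (k+1) / ((k : ℝ≥0∞) + 1)) *
                (ENNReal.ofReal C₂ * (ENNReal.ofReal γ ^ k * ((k.factorial : ℝ≥0∞))⁻¹) *
                  ENNReal.ofReal (γ * ‖x‖ ^ (d + ((k+1 : ℕ) : ℝ) * Sg) *
                    Real.exp (δ * ‖x‖ ^ α))))
              = ∑ k ∈ Finset.range (M+1), ∫⁻ τ in Set.Ioc (0:ℝ) t,
                  (ENNReal.ofReal (Λ τ) * Lfun Λ τ ^ k) *
                    (ENNReal.ofReal C₂ * (ENNReal.ofReal γ ^ k * ((k.factorial : ℝ≥0∞))⁻¹) *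
                      ENNReal.ofReal (γ * ‖x‖ ^ (d + ((k+1 : ℕ) : ℝ) * Sg) *
                        Real.exp (δ * ‖x‖ ^ α))) := by
                refine Finset.sum_congr rfl fun k _ => ?_
                rw [lintegral_mul_const _ (show Measurable fun τ => ENNReal.ofReal (Λ τ) * Lfun Λ τ ^ k from hΛm.mul (hLmeas.pow_const k)),
                  keyA Λ hΛmeas hLfin k t]
            _ = ∫⁻ τ in Set.Ioc (0:ℝ) t, ∑ k ∈ Finset.range (M+1),
                  (ENNReal.ofReal (Λ τ) * Lfun Λ τ ^ k) *
                    (ENNReal.ofReal C₂ * (ENNReal.ofReal γ ^ k * ((k.factorial : ℝ≥0∞))⁻¹) *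
                      ENNReal.ofReal (γ * ‖x‖ ^ (d + ((k+1 : ℕ) : ℝ) * Sg) *
                        Real.exp (δ * ‖x‖ ^ α))) :=
              (lintegral_finset_sum _ fun k _ =>
                ((hΛm.mul (hLmeas.pow_const k)).mul_const _)).symm
            _ ≤ _ := setLIntegral_mono' measurableSet_Ioc claim
        have hBsucc : ∀ k : ℕ,
            (Lfun Λ t ^ (k+1) / ((k : ℝ≥0∞) + 1)) *
              (ENNReal.ofReal C₂ * (ENNReal.ofReal γ ^ k * ((k.factorial : ℝ≥0∞))⁻¹) *
                ENNReal.ofReal (γ * ‖x‖ ^ (d + ((k+1 : ℕ) : ℝ) * Sg) *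
                  Real.exp (δ * ‖x‖ ^ α)))
            = Bfun Λ d Sg γ α δ C₂ x t (k+1) := by
          intro k
          have h1 : ENNReal.ofReal (γ * ‖x‖ ^ (d + ((k+1:ℕ):ℝ)*Sg) * Real.exp (δ * ‖x‖ ^ α))
              = ENNReal.ofReal γ *
                ENNReal.ofReal (‖x‖ ^ (d + ((k+1:ℕ):ℝ)*Sg) * Real.exp (δ * ‖x‖ ^ α)) := by
            rw [mul_assoc, ENNReal.ofReal_mul hγ0.le]
          have h2 : ENNReal.ofReal C₂ *
              ENNReal.ofReal (‖x‖ ^ (d + ((k+1:ℕ):ℝ)*Sg) * Real.exp (δ * ‖x‖ ^ α))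
              = ENNReal.ofReal (C₂ * ‖x‖ ^ (d + ((k+1:ℕ):ℝ)*Sg) * Real.exp (δ * ‖x‖ ^ α)) := by
            rw [← ENNReal.ofReal_mul hC₂.le, mul_assoc]
          have h3 : (((k+1).factorial : ℝ≥0∞))⁻¹
              = ((k : ℝ≥0∞) + 1)⁻¹ * ((k.factorial : ℝ≥0∞))⁻¹ := by
            rw [Nat.factorial_succ, Nat.cast_mul, Nat.cast_add, Nat.cast_one,
              ENNReal.mul_inv (Or.inl (by simp)) (Or.inl (by simp))]
          rw [Bfun, show ((k+1 : ℕ) : ℝ) = ((k:ℝ) + 1) by push_cast; ring] at *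
          rw [div_eq_mul_inv, h1, h3, ← h2, pow_succ]
          ring
        calc (∑ k ∈ Finset.range (M+1+1), Bfun Λ d Sg γ α δ C₂ x t k)
            = (∑ k ∈ Finset.range (M+1), Bfun Λ d Sg γ α δ C₂ x t (k+1))
                + Bfun Λ d Sg γ α δ C₂ x t 0 := Finset.sum_range_succ' _ (M+1)
          _ ≤ (∫⁻ τ in Set.Ioc (0:ℝ) t, ∫⁻ y,
                ENNReal.ofReal (K (x - y) * W y τ) * ν y τ)
                + Bfun Λ d Sg γ α δ C₂ x t 0 := by
              refine add_le_add_left ?_ _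
              refine le_trans (le_of_eq ?_) hDge
              exact Finset.sum_congr rfl fun k _ => (hBsucc k).symm
          _ = ENNReal.ofReal (C₂ * ‖x‖ ^ d * Real.exp (δ * ‖x‖ ^ α)) +
              (∫⁻ τ in Set.Ioc (0:ℝ) t, ∫⁻ y,
                ENNReal.ofReal (K (x - y) * W y τ) * ν y τ) := by
              rw [hB0, add_comm]
          _ ≤ ν x t := hν x t ht ht'
  -- conclusion
  intro x t ht ht'
  have hsum : (∑' k : ℕ, Bfun Λ d Sg γ α δ C₂ x t k) ≤ ν x t := by
    rw [ENNReal.tsum_eq_iSup_sum' (fun M => Finset.range (M+1)) (fun s => by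
      obtain ⟨nn, hnn⟩ := s.exists_nat_subset_range
      exact ⟨nn, hnn.trans (Finset.range_subset_range.mpr (Nat.le_succ nn))⟩)]
    exact iSup_le fun M => main M x t ht ht'
  have hint : IntegrableOn Λ (Set.Ioc (0:ℝ) t) := by
    apply Measure.integrableOn_of_bounded measure_Ioc_lt_top.ne
      hΛmeas.aestronglyMeasurable
    filter_upwards [ae_restrict_mem measurableSet_Ioc] with τ hτ
    rw [Real.norm_eq_abs, abs_of_pos (hΛpos τ)]
    exact le_csSup (hΛbdd t ht) ⟨τ, ⟨hτ.1.le, hτ.2⟩, rfl⟩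
  set I := ∫ τ in Set.Ioc (0:ℝ) t, Λ τ with hIdef
  have hI0 : 0 ≤ I :=
    setIntegral_nonneg measurableSet_Ioc fun τ _ => (hΛpos τ).le
  have hLI : Lfun Λ t = ENNReal.ofReal I :=
    (ofReal_integral_eq_lintegral_ofReal hint
      (Filter.Eventually.of_forall fun τ => (hΛpos τ).le)).symm
  have hc0 : 0 ≤ γ * I * ‖x‖ ^ Sg :=
    mul_nonneg (mul_nonneg hγ0.le hI0) (Real.rpow_nonneg (norm_nonneg x) Sg)
  have hterm : ∀ k : ℕ, Bfun Λ d Sg γ α δ C₂ x t k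
      = ENNReal.ofReal (C₂ * ‖x‖ ^ d * Real.exp (δ * ‖x‖ ^ α) *
          ((γ * I * ‖x‖ ^ Sg) ^ k / (k.factorial : ℝ))) := by
    intro k
    have hfa : ((k.factorial : ℝ≥0∞))⁻¹ = ENNReal.ofReal ((k.factorial : ℝ))⁻¹ := by
      rw [ENNReal.ofReal_inv_of_pos (by exact_mod_cast k.factorial_pos),
        ENNReal.ofReal_natCast]
    rw [Bfun, hLI, ← ENNReal.ofReal_pow hγ0.le, ← ENNReal.ofReal_pow hI0, hfa,
      ← ENNReal.ofReal_mul (by positivity),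
      ← ENNReal.ofReal_mul (by positivity),
      ← ENNReal.ofReal_mul (by positivity)]
    congr 1
    have hx1 : ‖x‖ ^ (d + (k:ℝ)*Sg) = ‖x‖ ^ d * (‖x‖ ^ Sg) ^ k := by
      rw [Real.rpow_add_of_nonneg (norm_nonneg x) hd (by positivity),
        mul_comm (k:ℝ) Sg, Real.rpow_mul (norm_nonneg x), Real.rpow_natCast]
    rw [hx1, mul_pow, mul_pow, div_eq_mul_inv]
    ring
  have hexp_tsum : C₂ * ‖x‖ ^ d * Real.exp (γ * I * ‖x‖ ^ Sg + δ * ‖x‖ ^ α)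
      = ∑' k : ℕ, C₂ * ‖x‖ ^ d * Real.exp (δ * ‖x‖ ^ α) *
          ((γ * I * ‖x‖ ^ Sg) ^ k / (k.factorial : ℝ)) := by
    rw [Real.exp_add,
      show Real.exp (γ * I * ‖x‖ ^ Sg)
          = ∑' k : ℕ, (γ * I * ‖x‖ ^ Sg) ^ k / (k.factorial : ℝ) by
        rw [Real.exp_eq_exp_ℝ, NormedSpace.exp_eq_tsum_div],
      tsum_mul_left]
    ring
  calc ENNReal.ofReal (C₂ * ‖x‖ ^ d *
          Real.exp (γ * (∫ τ in Set.Ioc (0 : ℝ) t, Λ τ) * ‖x‖ ^ Sg + δ * ‖x‖ ^ α))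
      = ENNReal.ofReal (∑' k : ℕ, C₂ * ‖x‖ ^ d * Real.exp (δ * ‖x‖ ^ α) *
          ((γ * I * ‖x‖ ^ Sg) ^ k / (k.factorial : ℝ))) := by
        rw [← hIdef, hexp_tsum]
    _ = ∑' k : ℕ, ENNReal.ofReal (C₂ * ‖x‖ ^ d * Real.exp (δ * ‖x‖ ^ α) *
          ((γ * I * ‖x‖ ^ Sg) ^ k / (k.factorial : ℝ))) :=
        ENNReal.ofReal_tsum_of_nonneg
          (fun k => mul_nonneg (by positivity)
            (div_nonneg (pow_nonneg hc0 k) (Nat.cast_nonneg _)))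
          ((Real.summable_pow_div_factorial _).mul_left _)
    _ = ∑' k : ℕ, Bfun Λ d Sg γ α δ C₂ x t k := tsum_congr fun k => (hterm k).symm
    _ ≤ ν x t := hsum
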